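/- (Equivalence of Maximum Diversification and Risk Parity under equicorrelation) For the constant-correlation covariance matrix Σ with σᵢ > 0 and 0 ≤ c < 1, the portfolio x with xᵢ = σᵢ⁻¹/∑ⱼ σⱼ⁻¹ satisfies the Risk Parity condition for volatility ρ(x) = √(xᵀΣx): the total risk contributions xᵢ ∂ρ/∂xᵢ(x) = xᵢ (Σx)ᵢ / √(xᵀΣx) are equal for all i. -/

import Mathlib

/-- Under equicorrelation, the portfolio with weights proportional to inverse
volatilities satisfies the Risk Parity condition: all total risk contributions
`TRCᵢ(x) = xᵢ (Sx)ᵢ / √(xᵀSx)` are equal. -/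
theorem stmt6 (n : ℕ) (hn : 2 ≤ n) (σ : Fin n → ℝ) (hσ : ∀ i, 0 < σ i)
    (c : ℝ) (hc1 : 0 ≤ c) (hc2 : c < 1)
    (S : Matrix (Fin n) (Fin n) ℝ)
    (hS : ∀ i j, S i j = if i = j then (σ i) ^ 2 else c * σ i * σ j)
    (x : Fin n → ℝ) (hx : ∀ i, x i = (σ i)⁻¹ / ∑ j, (σ j)⁻¹) :
    ∀ i j, x i * (S.mulVec x) i / Real.sqrt (∑ k, ∑ l, x k * S k l * x l)
         = x j * (S.mulVec x) j / Real.sqrt (∑ k, ∑ l, x k * S k l * x l) := by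
  set T := ∑ j, (σ j)⁻¹ with hT
  have hTpos : 0 < T := Finset.sum_pos (fun j _ => inv_pos.mpr (hσ j))
    ⟨⟨0, lt_of_lt_of_le two_pos hn⟩, Finset.mem_univ _⟩
  have key : ∀ i, x i * (S.mulVec x) i = (1 + c * ((n : ℝ) - 1)) / T ^ 2 := by
    intro i
    have hmv : (S.mulVec x) i = σ i * (1 + c * ((n : ℝ) - 1)) / T := by
      have hterm : ∀ j, S i j * x j
          = c * σ i / T + (if i = j then (σ i - c * σ i) / T else 0) := by
        intro j
        rw [hS, hx]
        by_cases h : i = j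
        · subst h
          simp only [if_pos rfl, ↓reduceIte]
          have := (hσ i).ne'
          field_simp
          ring
        · simp only [if_neg h]
          have := (hσ j).ne'
          field_simp
          ring
      show ∑ j, S i j * x j = _
      rw [Finset.sum_congr rfl (fun j _ => hterm j), Finset.sum_add_distrib,
        Finset.sum_ite_eq Finset.univ i (fun _ => (σ i - c * σ i) / T),
        if_pos (Finset.mem_univ i), Finset.sum_const, Finset.card_univ, Fintype.card_fin]
      have := hTpos.ne'
      field_simp
      linear_combination (c * σ i * ↑n) * mul_inv_cancel₀ this
    rw [hmv, hx]
    have := (hσ i).ne'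
    have := hTpos.ne'
    field_simp
  intro i j
  rw [key i, key j]
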